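/- arXiv:1902.08294 — 2 statements merged into one kernel-verified Lean document; each statement's English description precedes it below -/
import Mathlib

section
/- Suppose Assumptions A, B and C-1 hold and let (x^r, y^r) be generated by HiBSA (strongly concave case) with γ^r = 0 and constant β^r = β > 0. Then for every r ≥ 1 (where y^r is itself produced by the y-update from (x^r, y^{r−1})), ℓ(x^{r+1}, y^{r+1}) − ℓ(x^{r+1}, y^r) ≤ (1/ρ)‖y^{r+1} − y^r‖² − (θ − (1/(2ρ) + ρL_y²/2))‖y^r − y^{r−1}‖² + (ρL_y²/2)‖x^{r+1} − x^r‖². -/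
open scoped RealInnerProductSpace

/-- The `i`-th block space `ℝ^N`. -/
abbrev Blk (N : ℕ) : Type := EuclideanSpace ℝ (Fin N)

/-- The full `x`-space `ℝ^{NK}`, with the Euclidean (ℓ²) product norm. -/
abbrev XVec (N K : ℕ) : Type := PiLp 2 (fun _ : Fin K => Blk N)

/-- The `y`-space `ℝ^M`. -/
abbrev YVec (M : ℕ) : Type := EuclideanSpace ℝ (Fin M)

/-- `hibsaW xs r i = w_i^{r+1} = (x_1^{r+1},…,x_{i−1}^{r+1}, x_i^r,…,x_K^r)`. -/
noncomputable def hibsaW {N K : ℕ} (xs : ℕ → XVec N K) (r : ℕ) (i : Fin K) : XVec N K :=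
  WithLp.toLp 2 (fun j => if (j : ℕ) < (i : ℕ) then xs (r + 1) j else xs r j)

/-- Replace the `i`-th block of `x` by `z`. -/
noncomputable def blockUpdate {N K : ℕ} (x : XVec N K) (i : Fin K) (z : Blk N) : XVec N K :=
  WithLp.toLp 2 (Function.update x i z)


private lemma hibsa_young (ρ L p q : ℝ) (hρ : 0 < ρ) :
    L * p * q ≤ ρ * L ^ 2 / 2 * p ^ 2 + 1 / (2 * ρ) * q ^ 2 := by
  have h2ρ : (0:ℝ) < 2 * ρ := by linarith
  have e : ρ * L ^ 2 / 2 * p ^ 2 + 1 / (2 * ρ) * q ^ 2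
      = (ρ ^ 2 * L ^ 2 * p ^ 2 + q ^ 2) / (2 * ρ) := by
    field_simp
  rw [e, le_div_iff₀ h2ρ]
  nlinarith [sq_nonneg (ρ * L * p - q)]

private lemma hibsa_prox (ρ t S0 S1 I01 a2 b2 Gu G1 G2 : ℝ) (ht : 0 < t)
    (hval : S0 + t * S1 - 1 / (2 * ρ) * (b2 + 2 * t * I01 + t ^ 2 * a2) - Gu
      ≤ S0 - 1 / (2 * ρ) * b2 - G1)
    (hgc : Gu ≤ (1 - t) * G1 + t * G2) :
    G1 - G2 ≤ -S1 + 1 / (2 * ρ) * (2 * I01 + t * a2) := by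
  have key : t * (S1 - 1 / (2 * ρ) * (2 * I01 + t * a2) + (G1 - G2)) ≤ 0 := by
    nlinarith
  by_contra hcon
  push_neg at hcon
  nlinarith [mul_pos ht (show (0:ℝ) < S1 - 1 / (2 * ρ) * (2 * I01 + t * a2) + (G1 - G2) by
    linarith)]

private lemma hibsa_key (θ ρ Ly t : ℝ) (hρ : 0 < ρ) (hθ0 : 0 < θ) (htρθ : t ≤ ρ * θ)
    (F2 F1 G2 G1 W a b c v A B0 RB R1 S1 I01 : ℝ)
    (h1 : F2 - F1 ≤ A - θ / 2 * a ^ 2)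
    (h2 : B0 - RB ≤ -(θ * b ^ 2))
    (h4 : A - B0 - R1 + RB ≤ Ly * b * v)
    (h5 : R1 - S1 ≤ Ly * c * a)
    (h3 : G1 - G2 ≤ -S1 + 1 / (2 * ρ) * (2 * I01 + t * a ^ 2))
    (hveq : v ^ 2 = a ^ 2 - 2 * I01 + b ^ 2) :
    (F2 + W - G2) - (F1 + W - G1)
      ≤ 1 / ρ * a ^ 2 - (θ - (1 / (2 * ρ) + ρ * Ly ^ 2 / 2)) * b ^ 2
          + ρ * Ly ^ 2 / 2 * c ^ 2 := by
  have h2ρ : (0:ℝ) < 2 * ρ := by linarith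
  have yA : Ly * b * v ≤ ρ * Ly ^ 2 / 2 * b ^ 2 + 1 / (2 * ρ) * v ^ 2 := hibsa_young ρ Ly b v hρ
  have yB : Ly * c * a ≤ ρ * Ly ^ 2 / 2 * c ^ 2 + 1 / (2 * ρ) * a ^ 2 := hibsa_young ρ Ly c a hρ
  have iv : 1 / (2 * ρ) * v ^ 2
      = 1 / (2 * ρ) * a ^ 2 - 1 / (2 * ρ) * (2 * I01) + 1 / (2 * ρ) * b ^ 2 := by
    rw [hveq]
    ring
  have ht' : 1 / (2 * ρ) * (t * a ^ 2) ≤ θ / 2 * a ^ 2 := by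
    have ha : t * a ^ 2 ≤ ρ * θ * a ^ 2 := mul_le_mul_of_nonneg_right htρθ (sq_nonneg _)
    have hb : 1 / (2 * ρ) * (t * a ^ 2) ≤ 1 / (2 * ρ) * (ρ * θ * a ^ 2) :=
      mul_le_mul_of_nonneg_left ha (le_of_lt (div_pos one_pos h2ρ))
    have hc : 1 / (2 * ρ) * (ρ * θ * a ^ 2) = θ / 2 * a ^ 2 := by
      field_simp
    linarith
  simp only [one_div, mul_inv] at h3 iv yA yB ht' ⊢
  linarith [h1, h2, h3, h4, h5, yA, yB, iv, ht']
/-- **Lemma 2 (descent on `y`)** for HiBSA in the strongly concave case: under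
Assumptions A, B, C-1, with `γ^r = 0` and constant `β^r = β > 0`, for every `r ≥ 1`,
`ℓ(x^{r+1}, y^{r+1}) − ℓ(x^{r+1}, y^r) ≤ (1/ρ)‖y^{r+1} − y^r‖²
 − (θ − (1/(2ρ) + ρL_y²/2))‖y^r − y^{r−1}‖² + (ρL_y²/2)‖x^{r+1} − x^r‖²`. -/
theorem hibsa_descent_y
    {N K M : ℕ}
    -- Assumption A
    (f : XVec N K → YVec M → ℝ)
    (Xi : Fin K → Set (Blk N)) (hXiconv : ∀ i, Convex ℝ (Xi i))
    (hXicomp : ∀ i, IsCompact (Xi i))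
    (Y : Set (YVec M)) (hYconv : Convex ℝ Y) (hYcomp : IsCompact Y)
    (h : Fin K → Blk N → ℝ) (hhconv : ∀ i, ConvexOn ℝ Set.univ (h i))
    (g : YVec M → ℝ) (hgconv : ConvexOn ℝ Set.univ g)
    (Gfx : XVec N K → YVec M → XVec N K)
    (hGfx : ∀ x y, HasGradientAt (fun z => f z y) (Gfx x y) x)
    (Gfy : XVec N K → YVec M → YVec M)
    (hGfy : ∀ x y, HasGradientAt (fun z => f x z) (Gfy x y) y)
    (Lx : Fin K → ℝ)
    (hLx : ∀ (i : Fin K) (y : YVec M), y ∈ Y → ∀ x x' : XVec N K,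
      (∀ j, x j ∈ Xi j) → (∀ j, x' j ∈ Xi j) →
      ‖Gfx x' y i - Gfx x y i‖ ≤ Lx i * ‖x' - x‖)
    (Ly : ℝ)
    (hLy : ∀ (x x' : XVec N K) (y y' : YVec M),
      (∀ j, x j ∈ Xi j) → (∀ j, x' j ∈ Xi j) → y ∈ Y → y' ∈ Y →
      ‖Gfy x' y' - Gfy x y‖ ≤ Ly * Real.sqrt (‖x' - x‖ ^ 2 + ‖y' - y‖ ^ 2))
    -- Assumption B
    (U : Fin K → Blk N → XVec N K → YVec M → ℝ)
    (GU : Fin K → Blk N → XVec N K → YVec M → Blk N)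
    (hGU : ∀ i z w y, HasGradientAt (fun u => U i u w y) (GU i z w y) z)
    (μ : Fin K → ℝ) (hμpos : ∀ i, 0 < μ i)
    (hB1 : ∀ (i : Fin K) (w : XVec N K) (y : YVec M), y ∈ Y →
      ∀ z z' : Blk N, z ∈ Xi i → z' ∈ Xi i →
      ⟪GU i z' w y, z - z'⟫ + μ i / 2 * ‖z - z'‖ ^ 2 ≤ U i z w y - U i z' w y)
    (hB2 : ∀ (i : Fin K) (x : XVec N K) (y : YVec M),
      (∀ j, x j ∈ Xi j) → y ∈ Y → GU i (x i) x y = Gfx x y i)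
    (hB3 : ∀ (i : Fin K) (x : XVec N K) (y : YVec M),
      (∀ j, x j ∈ Xi j) → y ∈ Y →
      (∀ z ∈ Xi i, f (blockUpdate x i z) y ≤ U i z x y) ∧ U i (x i) x y = f x y)
    (Lu : Fin K → ℝ)
    (hB4 : ∀ (i : Fin K) (w : XVec N K) (y : YVec M) (z z' : Blk N),
      ‖GU i z w y - GU i z' w y‖ ≤ Lu i * ‖z - z'‖)
    -- Assumption C-1 (θ-strong concavity in y)
    (θ : ℝ) (hθ : 1 < θ)
    (hC1 : ∀ (x : XVec N K) (y z : YVec M), (∀ j, x j ∈ Xi j) → y ∈ Y → z ∈ Y →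
      f x z - f x y ≤ ⟪Gfy x y, z - y⟫ - θ / 2 * ‖z - y‖ ^ 2)
    -- HiBSA iterates (strongly concave case: γ^r = 0, β^r = β)
    (ρ β : ℝ) (hρ : 0 < ρ) (hβ : 0 < β)
    (xs : ℕ → XVec N K) (ys : ℕ → YVec M)
    (hx0 : ∀ j, xs 0 j ∈ Xi j) (hy0 : ys 0 ∈ Y)
    (hxup : ∀ (r : ℕ) (i : Fin K),
      xs (r + 1) i ∈ Xi i ∧
      ∀ z ∈ Xi i,
        U i (xs (r + 1) i) (hibsaW xs r i) (ys r) + h i (xs (r + 1) i)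
            + β / 2 * ‖xs (r + 1) i - xs r i‖ ^ 2
          ≤ U i z (hibsaW xs r i) (ys r) + h i z + β / 2 * ‖z - xs r i‖ ^ 2)
    (hyup : ∀ r : ℕ,
      ys (r + 1) ∈ Y ∧
      ∀ u ∈ Y,
        ⟪Gfy (xs (r + 1)) (ys r), u - ys r⟫ - 1 / (2 * ρ) * ‖u - ys r‖ ^ 2 - g u
          ≤ ⟪Gfy (xs (r + 1)) (ys r), ys (r + 1) - ys r⟫
              - 1 / (2 * ρ) * ‖ys (r + 1) - ys r‖ ^ 2 - g (ys (r + 1))) :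
    -- conclusion: descent estimate on the y-update
    ∀ r : ℕ, 1 ≤ r →
      (f (xs (r + 1)) (ys (r + 1)) + ∑ i, h i (xs (r + 1) i) - g (ys (r + 1)))
          - (f (xs (r + 1)) (ys r) + ∑ i, h i (xs (r + 1) i) - g (ys r))
        ≤ 1 / ρ * ‖ys (r + 1) - ys r‖ ^ 2
            - (θ - (1 / (2 * ρ) + ρ * Ly ^ 2 / 2)) * ‖ys r - ys (r - 1)‖ ^ 2
            + ρ * Ly ^ 2 / 2 * ‖xs (r + 1) - xs r‖ ^ 2 := by
  intro r hr
  obtain ⟨n, rfl⟩ : ∃ n, r = n + 1 := ⟨r - 1, by omega⟩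
  simp only [Nat.add_sub_cancel]
  have hθ0 : (0:ℝ) < θ := lt_trans one_pos hθ
  have hYmem : ∀ m, ys m ∈ Y := by
    intro m
    match m with
    | 0 => exact hy0
    | (k+1) => exact (hyup k).1
  have hXmem : ∀ (m : ℕ) (j : Fin K), xs (m + 1) j ∈ Xi j := fun m j => (hxup m j).1
  set y0 := ys n with hy0d
  set y1 := ys (n + 1) with hy1d
  set y2 := ys (n + 1 + 1) with hy2d
  set x0 := xs (n + 1) with hx0d
  set x1 := xs (n + 1 + 1) with hx1d
  set Q := Gfy x1 y1 with hQd
  set R := Gfy x1 y0 with hRd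
  set S := Gfy x0 y0 with hSd
  have hx1m : ∀ j, x1 j ∈ Xi j := fun j => hXmem (n+1) j
  have hx0m : ∀ j, x0 j ∈ Xi j := fun j => hXmem n j
  have hy0m : y0 ∈ Y := hYmem n
  have hy1m : y1 ∈ Y := hYmem (n+1)
  have hy2m : y2 ∈ Y := hYmem (n+1+1)
  -- (1) strong concavity between y1 and y2
  have h1 : f x1 y2 - f x1 y1 ≤ ⟪Q, y2 - y1⟫ - θ / 2 * ‖y2 - y1‖ ^ 2 :=
    hC1 x1 y1 y2 hx1m hy1m hy2m
  -- (2) strong monotonicity between y0 and y1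
  have h2 : ⟪Q, y1 - y0⟫ - ⟪R, y1 - y0⟫ ≤ -(θ * ‖y1 - y0‖ ^ 2) := by
    have hm1 : f x1 y1 - f x1 y0 ≤ ⟪R, y1 - y0⟫ - θ / 2 * ‖y1 - y0‖ ^ 2 :=
      hC1 x1 y0 y1 hx1m hy0m hy1m
    have hm2 : f x1 y0 - f x1 y1 ≤ ⟪Q, y0 - y1⟫ - θ / 2 * ‖y0 - y1‖ ^ 2 :=
      hC1 x1 y1 y0 hx1m hy1m hy0m
    have e1 : ⟪Q, y0 - y1⟫ = -⟪Q, y1 - y0⟫ := by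
      rw [← inner_neg_right, neg_sub]
    have e2 : ‖y0 - y1‖ = ‖y1 - y0‖ := norm_sub_rev _ _
    rw [e1, e2] at hm2
    linarith
  -- Lipschitz bounds
  have hQR : ‖Q - R‖ ≤ Ly * ‖y1 - y0‖ := by
    have hl := hLy x1 x1 y0 y1 hx1m hx1m hy0m hy1m
    have e : Real.sqrt (‖x1 - x1‖ ^ 2 + ‖y1 - y0‖ ^ 2) = ‖y1 - y0‖ := by
      rw [sub_self, norm_zero]
      have e' : (0:ℝ) ^ 2 + ‖y1 - y0‖ ^ 2 = ‖y1 - y0‖ ^ 2 := by ring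
      rw [e']
      exact Real.sqrt_sq (norm_nonneg _)
    rw [e] at hl
    exact hl
  have hRS : ‖R - S‖ ≤ Ly * ‖x1 - x0‖ := by
    have hl := hLy x0 x1 y0 y0 hx0m hx1m hy0m hy0m
    have e : Real.sqrt (‖x1 - x0‖ ^ 2 + ‖y0 - y0‖ ^ 2) = ‖x1 - x0‖ := by
      rw [sub_self, norm_zero]
      have e' : ‖x1 - x0‖ ^ 2 + (0:ℝ) ^ 2 = ‖x1 - x0‖ ^ 2 := by ring
      rw [e']
      exact Real.sqrt_sq (norm_nonneg _)
    rw [e] at hl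
    exact hl
  have h4 : ⟪Q, y2 - y1⟫ - ⟪Q, y1 - y0⟫ - ⟪R, y2 - y1⟫ + ⟪R, y1 - y0⟫
      ≤ Ly * ‖y1 - y0‖ * ‖(y2 - y1) - (y1 - y0)‖ := by
    have hcs : ⟪Q - R, (y2 - y1) - (y1 - y0)⟫ ≤ ‖Q - R‖ * ‖(y2 - y1) - (y1 - y0)‖ :=
      real_inner_le_norm _ _
    have h' : ‖Q - R‖ * ‖(y2 - y1) - (y1 - y0)‖ ≤ Ly * ‖y1 - y0‖ * ‖(y2 - y1) - (y1 - y0)‖ :=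
      mul_le_mul_of_nonneg_right hQR (norm_nonneg _)
    have hexp : ⟪Q - R, (y2 - y1) - (y1 - y0)⟫
        = ⟪Q, y2 - y1⟫ - ⟪Q, y1 - y0⟫ - ⟪R, y2 - y1⟫ + ⟪R, y1 - y0⟫ := by
      simp only [inner_sub_left, inner_sub_right]
      ring
    rw [hexp] at hcs
    linarith
  have h5 : ⟪R, y2 - y1⟫ - ⟪S, y2 - y1⟫ ≤ Ly * ‖x1 - x0‖ * ‖y2 - y1‖ := by
    have hcs : ⟪R - S, y2 - y1⟫ ≤ ‖R - S‖ * ‖y2 - y1‖ := real_inner_le_norm _ _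
    have h' : ‖R - S‖ * ‖y2 - y1‖ ≤ Ly * ‖x1 - x0‖ * ‖y2 - y1‖ :=
      mul_le_mul_of_nonneg_right hRS (norm_nonneg _)
    have hexp : ⟪R - S, y2 - y1⟫ = ⟪R, y2 - y1⟫ - ⟪S, y2 - y1⟫ := by
      simp only [inner_sub_left]
    rw [hexp] at hcs
    linarith
  -- (3) optimality of the previous y-update, strong version with parameter t
  set t := min 1 (ρ * θ) with htdef
  have ht0 : 0 < t := lt_min one_pos (mul_pos hρ hθ0)
  have ht1 : t ≤ 1 := min_le_left _ _
  have htρθ : t ≤ ρ * θ := min_le_right _ _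
  have hutm : (1 - t) • y1 + t • y2 ∈ Y := hYconv hy1m hy2m (by linarith) ht0.le (by ring)
  have hval : ⟪S, ((1 - t) • y1 + t • y2) - y0⟫
        - 1 / (2 * ρ) * ‖((1 - t) • y1 + t • y2) - y0‖ ^ 2
        - g ((1 - t) • y1 + t • y2)
      ≤ ⟪S, y1 - y0⟫ - 1 / (2 * ρ) * ‖y1 - y0‖ ^ 2 - g y1 := (hyup n).2 _ hutm
  have hinner : ⟪S, ((1 - t) • y1 + t • y2) - y0⟫ = ⟪S, y1 - y0⟫ + t * ⟪S, y2 - y1⟫ := by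
    have e : ((1 - t) • y1 + t • y2) - y0 = (y1 - y0) + t • (y2 - y1) := by module
    rw [e, inner_add_right, real_inner_smul_right]
  have hnorm : ‖((1 - t) • y1 + t • y2) - y0‖ ^ 2
      = ‖y1 - y0‖ ^ 2 + 2 * t * ⟪y1 - y0, y2 - y1⟫ + t ^ 2 * ‖y2 - y1‖ ^ 2 := by
    have e : ((1 - t) • y1 + t • y2) - y0 = (y1 - y0) + t • (y2 - y1) := by module
    rw [e, norm_add_sq_real, real_inner_smul_right, norm_smul, Real.norm_eq_abs, mul_pow, sq_abs]
    ring
  have hgc : g ((1 - t) • y1 + t • y2) ≤ (1 - t) * g y1 + t * g y2 :=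
    hgconv.2 (Set.mem_univ y1) (Set.mem_univ y2) (by linarith) ht0.le (by ring)
  rw [hinner, hnorm] at hval
  have h3 : g y1 - g y2
      ≤ -⟪S, y2 - y1⟫ + 1 / (2 * ρ) * (2 * ⟪y1 - y0, y2 - y1⟫ + t * ‖y2 - y1‖ ^ 2) :=
    hibsa_prox ρ t _ _ _ _ _ _ _ _ ht0 hval hgc
  have hveq : ‖(y2 - y1) - (y1 - y0)‖ ^ 2
      = ‖y2 - y1‖ ^ 2 - 2 * ⟪y1 - y0, y2 - y1⟫ + ‖y1 - y0‖ ^ 2 := by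
    rw [norm_sub_sq_real, real_inner_comm (y1 - y0) (y2 - y1)]
  exact hibsa_key θ ρ Ly t hρ hθ0 htρθ (f x1 y2) (f x1 y1) (g y2) (g y1)
    (∑ i, h i (x1 i)) ‖y2 - y1‖ ‖y1 - y0‖ ‖x1 - x0‖ ‖(y2 - y1) - (y1 - y0)‖
    (⟪Q, y2 - y1⟫) (⟪Q, y1 - y0⟫) (⟪R, y1 - y0⟫) (⟪R, y2 - y1⟫) (⟪S, y2 - y1⟫)
    (⟪y1 - y0, y2 - y1⟫) h1 h2 h4 h5 h3 hveq
end

section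
/- Suppose Assumptions A and B hold. Let y^r ∈ Y, x^r ∈ X, β^r > L_{x_i} for all i, and for each i let x_i^{r+1} = argmin_{x_i ∈ X_i} U_i(x_i; w_i^{r+1}, y^r) + h_i(x_i) + (β^r/2)‖x_i − x_i^r‖², where w_i^{r+1} := (x_1^{r+1},…,x_{i−1}^{r+1}, x_i^r,…,x_K^r). Then ℓ(x^{r+1}, y^r) − ℓ(x^r, y^r) ≤ −(β^r/2 + μ)‖x^{r+1} − x^r‖², where μ := min_i μ_i. -/
open scoped RealInnerProductSpace

/-- `wMix x x' i = (x'_1,…,x'_{i−1}, x_i,…,x_K)`: the blocks before `i` already updated. -/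
noncomputable def wMix {N K : ℕ} (x x' : XVec N K) (i : Fin K) : XVec N K :=
  WithLp.toLp 2 (fun j => if (j : ℕ) < (i : ℕ) then x' j else x j)

/-- Chain of partially-updated iterates: `chainW x x' n` has the first `n` blocks updated. -/
noncomputable def chainW {N K : ℕ} (x x' : XVec N K) (n : ℕ) : XVec N K :=
  WithLp.toLp 2 (fun j => if (j : ℕ) < n then x' j else x j)

/-- Descent lemma along a segment, from a pointwise bound on the gradient increment. -/
lemma hibsa_descent {E : Type*} [NormedAddCommGroup E] [InnerProductSpace ℝ E] [CompleteSpace E]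
    (f : E → ℝ) (G : E → E) (hf : ∀ z, HasGradientAt f (G z) z)
    (w e : E) (L : ℝ)
    (hL : ∀ t ∈ Set.Icc (0:ℝ) 1, ⟪G (w + t • e) - G w, e⟫ ≤ L * t) :
    f (w + e) ≤ f w + ⟪G w, e⟫ + L / 2 := by
  have hg : ∀ t : ℝ, HasDerivAt (fun s : ℝ => f (w + s • e)) ⟪G (w + t • e), e⟫ t := by
    intro t
    have hc : HasDerivAt (fun s : ℝ => w + s • e) e t := by
      simpa using ((hasDerivAt_id t).smul_const e).const_add w
    have hfd := (hf (w + t • e)).hasFDerivAt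
    have := hfd.comp_hasDerivAt t hc
    simpa [InnerProductSpace.toDual_apply_apply, Function.comp_def] using this
  set φ : ℝ → ℝ := fun t => f (w + t • e) - t * ⟪G w, e⟫ - L * t ^ 2 / 2 with hφ
  have hφ' : ∀ t : ℝ, HasDerivAt φ (⟪G (w + t • e), e⟫ - ⟪G w, e⟫ - L * t) t := by
    intro t
    have h1 : HasDerivAt (fun s : ℝ => s * ⟪G w, e⟫) ⟪G w, e⟫ t := by
      simpa using (hasDerivAt_id t).mul_const (⟪G w, e⟫)
    have h2 : HasDerivAt (fun s : ℝ => L * s ^ 2 / 2) (L * t) t := by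
      have := ((hasDerivAt_pow 2 t).const_mul L).div_const 2
      simpa using this.congr_deriv (by ring)
    exact ((hg t).sub h1).sub h2
  have hanti : AntitoneOn φ (Set.Icc 0 1) := by
    apply antitoneOn_of_deriv_nonpos (convex_Icc 0 1)
    · exact fun t _ => ((hφ' t).continuousAt).continuousWithinAt
    · exact fun t _ => ((hφ' t).differentiableAt).differentiableWithinAt
    · intro t ht
      rw [interior_Icc] at ht
      rw [(hφ' t).deriv]
      have := hL t ⟨le_of_lt ht.1, le_of_lt ht.2⟩
      rw [inner_sub_left] at this
      linarith
  have h01 := hanti (Set.left_mem_Icc.2 zero_le_one) (Set.right_mem_Icc.2 zero_le_one) zero_le_one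
  simp only [hφ, zero_smul, add_zero, one_smul, zero_pow, mul_zero, zero_mul, sub_zero,
    one_pow, mul_one, one_mul] at h01
  linarith

/-- Quadratic growth at the minimizer of a strongly-convex + convex + proximal objective. -/
lemma hibsa_strong_min {E : Type*} [NormedAddCommGroup E] [InnerProductSpace ℝ E]
    (F h : E → ℝ) (GF : E → E) (S : Set E) (hS : Convex ℝ S)
    (hh : ConvexOn ℝ Set.univ h) (μ β : ℝ) (hμβ : 0 ≤ μ + β)
    (a b : E) (ha : a ∈ S) (hb : b ∈ S)
    (hsc : ∀ z ∈ S, ∀ z' ∈ S, ⟪GF z', z - z'⟫ + μ / 2 * ‖z - z'‖ ^ 2 ≤ F z - F z')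
    (hmin : ∀ z ∈ S, F b + h b + β / 2 * ‖b - a‖ ^ 2 ≤ F z + h z + β / 2 * ‖z - a‖ ^ 2) :
    F b + h b - (F a + h a) ≤ -(μ / 2 + β) * ‖b - a‖ ^ 2 := by
  set d : ℝ := ‖b - a‖ ^ 2 with hd
  have hd0 : 0 ≤ d := by positivity
  have key : ∀ t : ℝ, 0 < t → t ≤ 1 →
      F b + h b - (F a + h a) ≤ -(μ / 2 + β) * d + t / 2 * (μ + β) * d := by
    intro t ht0 ht1
    set zt : E := (1 - t) • b + t • a with hzt
    have hztS : zt ∈ S := hS hb ha (by linarith) (le_of_lt ht0) (by ring)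
    have hhzt : h zt ≤ (1 - t) * h b + t * h a :=
      hh.2 (Set.mem_univ b) (Set.mem_univ a) (by linarith) (le_of_lt ht0) (by ring)
    have hbzt : b - zt = t • (b - a) := by
      rw [hzt]; module
    have hazt : a - zt = -((1 - t) • (b - a)) := by
      rw [hzt]; module
    have hzta : zt - a = (1 - t) • (b - a) := by
      rw [hzt]; module
    have hnb : ‖b - zt‖ ^ 2 = t ^ 2 * d := by
      rw [hbzt, norm_smul, mul_pow, hd, Real.norm_eq_abs, sq_abs]
    have hna : ‖a - zt‖ ^ 2 = (1 - t) ^ 2 * d := by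
      rw [hazt, norm_neg, norm_smul, mul_pow, hd, Real.norm_eq_abs, sq_abs]
    have hnza : ‖zt - a‖ ^ 2 = (1 - t) ^ 2 * d := by
      rw [hzta, norm_smul, mul_pow, hd, Real.norm_eq_abs, sq_abs]
    have h1 := hsc b hb zt hztS
    have h2 := hsc a ha zt hztS
    have hinner : (1 - t) * ⟪GF zt, b - zt⟫ + t * ⟪GF zt, a - zt⟫ = 0 := by
      rw [hbzt, hazt, inner_neg_right, real_inner_smul_right, real_inner_smul_right]
      ring
    have hcomb : F zt ≤ (1 - t) * F b + t * F a - μ / 2 * (t * (1 - t)) * d := by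
      have e1 : (1 - t) * (⟪GF zt, b - zt⟫ + μ / 2 * ‖b - zt‖ ^ 2) ≤ (1 - t) * (F b - F zt) :=
        mul_le_mul_of_nonneg_left h1 (by linarith)
      have e2 : t * (⟪GF zt, a - zt⟫ + μ / 2 * ‖a - zt‖ ^ 2) ≤ t * (F a - F zt) :=
        mul_le_mul_of_nonneg_left h2 (le_of_lt ht0)
      rw [hnb] at e1; rw [hna] at e2
      nlinarith [e1, e2, hinner]
    have hm := hmin zt hztS
    rw [hnza] at hm
    have hmul : t * (F b + h b - (F a + h a)) ≤
        t * (-(μ / 2 + β) * d + t / 2 * (μ + β) * d) := by nlinarith [hm, hcomb, hhzt]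
    exact le_of_mul_le_mul_left hmul ht0
  refine le_of_forall_pos_le_add fun ε hε => ?_
  set c : ℝ := (μ + β) * d with hc
  have hc0 : 0 ≤ c := mul_nonneg hμβ hd0
  rcases eq_or_lt_of_le hc0 with hc' | hc'
  · have := key 1 one_pos le_rfl
    nlinarith
  · set t : ℝ := min 1 (ε / c) with htdef
    have ht0 : 0 < t := lt_min one_pos (div_pos hε hc')
    have ht1 : t ≤ 1 := min_le_left _ _
    have := key t ht0 ht1
    have htc : t * c ≤ ε := by
      calc t * c ≤ (ε / c) * c := mul_le_mul_of_nonneg_right (min_le_right _ _) (le_of_lt hc')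
      _ = ε := div_mul_cancel₀ ε (ne_of_gt hc')
    nlinarith

/-- Per-round sufficient decrease of the `x`-blocks (concave case): under Assumptions A
and B, if `β^r > L_{xᵢ}` for all `i` and `x'` is produced from `(x, y)` by one round of
HiBSA block updates with proximal parameter `β^r`, then
`ℓ(x', y) − ℓ(x, y) ≤ −(β^r/2 + μ)‖x' − x‖²`, where `μ = minᵢ μᵢ`. -/
theorem hibsa_sufficient_decrease_x
    {N K M : ℕ} [NeZero K]
    -- Assumption A
    (f : XVec N K → YVec M → ℝ)
    (Xi : Fin K → Set (Blk N)) (hXiconv : ∀ i, Convex ℝ (Xi i))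
    (hXicomp : ∀ i, IsCompact (Xi i))
    (Y : Set (YVec M)) (hYconv : Convex ℝ Y) (hYcomp : IsCompact Y)
    (h : Fin K → Blk N → ℝ) (hhconv : ∀ i, ConvexOn ℝ Set.univ (h i))
    (g : YVec M → ℝ) (hgconv : ConvexOn ℝ Set.univ g)
    (Gfx : XVec N K → YVec M → XVec N K)
    (hGfx : ∀ x y, HasGradientAt (fun z => f z y) (Gfx x y) x)
    (Lx : Fin K → ℝ)
    (hLx : ∀ (i : Fin K) (y : YVec M), y ∈ Y → ∀ x x' : XVec N K,
      (∀ j, x j ∈ Xi j) → (∀ j, x' j ∈ Xi j) →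
      ‖Gfx x' y i - Gfx x y i‖ ≤ Lx i * ‖x' - x‖)
    -- Assumption B
    (U : Fin K → Blk N → XVec N K → YVec M → ℝ)
    (GU : Fin K → Blk N → XVec N K → YVec M → Blk N)
    (hGU : ∀ i z w y, HasGradientAt (fun u => U i u w y) (GU i z w y) z)
    (μ : Fin K → ℝ) (hμpos : ∀ i, 0 < μ i)
    (μmin : ℝ) (hμmin : μmin = ⨅ i, μ i)
    (hB1 : ∀ (i : Fin K) (w : XVec N K) (y : YVec M), y ∈ Y →
      ∀ z z' : Blk N, z ∈ Xi i → z' ∈ Xi i →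
      ⟪GU i z' w y, z - z'⟫ + μ i / 2 * ‖z - z'‖ ^ 2 ≤ U i z w y - U i z' w y)
    (hB2 : ∀ (i : Fin K) (x : XVec N K) (y : YVec M),
      (∀ j, x j ∈ Xi j) → y ∈ Y → GU i (x i) x y = Gfx x y i)
    (hB3 : ∀ (i : Fin K) (x : XVec N K) (y : YVec M),
      (∀ j, x j ∈ Xi j) → y ∈ Y →
      (∀ z ∈ Xi i, f (blockUpdate x i z) y ≤ U i z x y) ∧ U i (x i) x y = f x y)
    (Lu : Fin K → ℝ)
    (hB4 : ∀ (i : Fin K) (w : XVec N K) (y : YVec M) (z z' : Blk N),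
      ‖GU i z w y - GU i z' w y‖ ≤ Lu i * ‖z - z'‖)
    -- one round of HiBSA x-updates with proximal parameter βr > L_{xᵢ}
    (βr : ℝ) (hβr : ∀ i, Lx i < βr)
    (x x' : XVec N K) (y : YVec M)
    (hxfeas : ∀ j, x j ∈ Xi j) (hy : y ∈ Y)
    (hup : ∀ i : Fin K,
      x' i ∈ Xi i ∧
      ∀ z ∈ Xi i,
        U i (x' i) (wMix x x' i) y + h i (x' i) + βr / 2 * ‖x' i - x i‖ ^ 2
          ≤ U i z (wMix x x' i) y + h i z + βr / 2 * ‖z - x i‖ ^ 2) :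
    -- conclusion: sufficient decrease
    (f x' y + ∑ i, h i (x' i) - g y) - (f x y + ∑ i, h i (x i) - g y)
      ≤ -(βr / 2 + μmin) * ‖x' - x‖ ^ 2 := by
  classical
  by_cases hxx : x' = x
  · subst hxx
    rw [sub_self, sub_self, norm_zero]
    norm_num
  have hxfeas' : ∀ j, x' j ∈ Xi j := fun j => (hup j).1
  have hnpos : 0 < ‖x' - x‖ := by
    rw [norm_pos_iff]
    exact sub_ne_zero.mpr hxx
  have hLnn : ∀ i, 0 ≤ Lx i := by
    intro i
    have h1 := hLx i y hy x x' hxfeas hxfeas'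
    nlinarith [norm_nonneg (Gfx x' y i - Gfx x y i), hnpos]
  have hμminle : ∀ i, μmin ≤ μ i := by
    intro i
    rw [hμmin]
    exact ciInf_le (Finite.bddBelow_range μ) i
  -- chain facts
  have hWfeas : ∀ (n : ℕ) (j : Fin K), chainW x x' n j ∈ Xi j := by
    intro n j
    unfold chainW
    by_cases hj : (j : ℕ) < n
    · simp only [hj, if_true]; exact hxfeas' j
    · simp only [hj, if_false]; exact hxfeas j
  have hW0 : chainW x x' 0 = x := by
    refine PiLp.ext fun j => ?_; simp [chainW]
  have hWK : chainW x x' K = x' := by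
    refine PiLp.ext fun j => ?_; simp [chainW, j.isLt]
  have hWsucc : ∀ i : Fin K, blockUpdate (chainW x x' i) i (x' i) = chainW x x' ((i : ℕ) + 1) := by
    intro i
    refine PiLp.ext fun j => ?_
    by_cases hji : j = i
    · subst hji
      simp [blockUpdate, Function.update, chainW]
    · have hne : (j : ℕ) ≠ (i : ℕ) := fun hc => hji (Fin.ext hc)
      simp only [blockUpdate, Function.update_of_ne hji, chainW]
      by_cases hj2 : (j : ℕ) < (i : ℕ)
      · simp [hj2, Nat.lt_succ_of_lt hj2]
      · have hj3 : ¬ ((j : ℕ) < (i : ℕ) + 1) := by omega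
        simp [hj2, hj3]
  -- per-block decrease
  have key : ∀ i : Fin K,
      f (chainW x x' ((i : ℕ) + 1)) y + h i (x' i) - (f (chainW x x' i) y + h i (x i))
        ≤ -(βr / 2 + μmin) * ‖x' i - x i‖ ^ 2 := by
    intro i
    set w : XVec N K := chainW x x' i with hw
    have hwfeas : ∀ j, w j ∈ Xi j := hWfeas i
    have hwi : w i = x i := by simp [hw, chainW]
    have haS : x i ∈ Xi i := hxfeas i
    have hbS : x' i ∈ Xi i := hxfeas' i
    have hd0 : (0:ℝ) ≤ ‖x' i - x i‖ ^ 2 := by positivity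
    have hB3w := hB3 i w y hwfeas hy
    have S1 : f (chainW x x' ((i : ℕ) + 1)) y ≤ U i (x' i) w y := by
      have := hB3w.1 (x' i) hbS
      rwa [hWsucc i] at this
    have S2 : U i (x i) w y = f w y := by
      have := hB3w.2
      rwa [hwi] at this
    have S3 : U i (x' i) w y + h i (x' i) - (U i (x i) w y + h i (x i))
        ≤ -(μ i / 2 + βr) * ‖x' i - x i‖ ^ 2 := by
      apply hibsa_strong_min (fun z => U i z w y) (h i) (fun z => GU i z w y) (Xi i)
        (hXiconv i) (hhconv i) (μ i) βr (by linarith [hμpos i, hβr i, hLnn i])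
        (x i) (x' i) haS hbS
      · intro z hz z' hz'
        exact hB1 i w y hy z z' hz hz'
      · intro z hz
        exact (hup i).2 z hz
    have S5grad : GU i (x i) w y = Gfx w y i := by
      have := hB2 i w y hwfeas hy
      rwa [hwi] at this
    have S5 : ⟪Gfx w y i, x' i - x i⟫
        ≤ U i (x' i) w y - U i (x i) w y - μ i / 2 * ‖x' i - x i‖ ^ 2 := by
      have := hB1 i w y hy (x' i) (x i) hbS haS
      rw [S5grad] at this
      linarith
    -- descent lemma for f in block i
    set e : XVec N K := WithLp.toLp 2 (Pi.single i (x' i - x i)) with he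
    have hei : e i = x' i - x i := by rw [he]; simp
    have hej : ∀ j, j ≠ i → e j = 0 := by
      intro j hj; rw [he]; exact Pi.single_eq_of_ne hj _
    have hwe : w + e = chainW x x' ((i : ℕ) + 1) := by
      rw [← hWsucc i]
      refine PiLp.ext fun j => ?_
      by_cases hji : j = i
      · subst hji
        show w j + e j = _
        rw [hei, hwi]
        simp only [blockUpdate, Function.update_self]
        abel
      · show w j + e j = _
        rw [hej j hji]
        simp [blockUpdate, Function.update_of_ne hji, hw]
    have hinnere : ∀ u : XVec N K, ⟪u, e⟫ = ⟪u i, x' i - x i⟫ := by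
      intro u
      rw [PiLp.inner_apply]
      rw [Finset.sum_eq_single i]
      · rw [hei]
      · intro j _ hj
        rw [hej j hj, inner_zero_right]
      · intro hmem; exact absurd (Finset.mem_univ i) hmem
    have hnorme : ‖e‖ = ‖x' i - x i‖ := by
      have := PiLp.norm_single 2 (fun _ : Fin K => Blk N) i (x' i - x i)
      exact this
    have S4 : f (chainW x x' ((i : ℕ) + 1)) y
        ≤ f w y + ⟪Gfx w y i, x' i - x i⟫ + (Lx i * ‖x' i - x i‖ ^ 2) / 2 := by
      have hdes := hibsa_descent (fun z => f z y) (fun z => Gfx z y) (fun z => hGfx z y)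
        w e (Lx i * ‖x' i - x i‖ ^ 2) ?_
      · rw [hwe, hinnere] at hdes
        exact hdes
      · intro t ht
        have hfeas2 : ∀ j, (w + t • e) j ∈ Xi j := by
          intro j
          by_cases hji : j = i
          · subst hji
            have hval : (w + t • e) j = (1 - t) • x j + t • x' j := by
              show w j + t • e j = _
              rw [hei, hwi]
              module
            rw [hval]
            exact hXiconv j (hxfeas j) (hxfeas' j) (by linarith [ht.2]) ht.1 (by ring)
          · have hval : (w + t • e) j = w j := by
              show w j + t • e j = _
              rw [hej j hji, smul_zero, add_zero]
            rw [hval]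
            exact hwfeas j
        have hdiff := hLx i y hy w (w + t • e) hwfeas hfeas2
        have hnorm : ‖(w + t • e) - w‖ = t * ‖x' i - x i‖ := by
          have : (w + t • e) - w = t • e := by abel
          rw [this, norm_smul, hnorme, Real.norm_eq_abs, abs_of_nonneg ht.1]
        rw [hinnere]
        calc ⟪(Gfx (w + t • e) y - Gfx w y) i, x' i - x i⟫
            ≤ ‖(Gfx (w + t • e) y - Gfx w y) i‖ * ‖x' i - x i‖ := real_inner_le_norm _ _
          _ = ‖Gfx (w + t • e) y i - Gfx w y i‖ * ‖x' i - x i‖ := rfl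
          _ ≤ (Lx i * ‖(w + t • e) - w‖) * ‖x' i - x i‖ :=
              mul_le_mul_of_nonneg_right hdiff (norm_nonneg _)
          _ = (Lx i * ‖x' i - x i‖ ^ 2) * t := by rw [hnorm]; ring
    -- combine
    have hcoeff : βr / 2 + μmin ≤ μ i + βr - Lx i / 2 := by
      have := hμminle i
      have := hβr i
      linarith
    have hstep : f (chainW x x' ((i : ℕ) + 1)) y + h i (x' i) - (f (chainW x x' i) y + h i (x i))
        ≤ -(μ i + βr - Lx i / 2) * ‖x' i - x i‖ ^ 2 := by
      rw [← hw]
      linarith [S1, S2, S3, S4, S5]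
    calc f (chainW x x' ((i : ℕ) + 1)) y + h i (x' i) - (f (chainW x x' i) y + h i (x i))
        ≤ -(μ i + βr - Lx i / 2) * ‖x' i - x i‖ ^ 2 := hstep
      _ ≤ -(βr / 2 + μmin) * ‖x' i - x i‖ ^ 2 := by
          have := mul_le_mul_of_nonneg_right hcoeff hd0
          linarith
  -- telescoping sum
  have htel : f x' y - f x y
      = ∑ i : Fin K, (f (chainW x x' ((i : ℕ) + 1)) y - f (chainW x x' i) y) := by
    rw [Fin.sum_univ_eq_sum_range (fun n => f (chainW x x' (n + 1)) y - f (chainW x x' n) y) K]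
    rw [Finset.sum_range_sub (fun n => f (chainW x x' n) y) K]
    rw [hW0, hWK]
  have hsum : ∑ i : Fin K, ‖x' i - x i‖ ^ 2 = ‖x' - x‖ ^ 2 := by
    rw [PiLp.norm_sq_eq_of_L2]
    exact Finset.sum_congr rfl fun i _ => by rw [PiLp.sub_apply]
  have expand : ∑ i : Fin K,
      (f (chainW x x' ((i : ℕ) + 1)) y + h i (x' i) - (f (chainW x x' i) y + h i (x i)))
      = (f x' y + ∑ i, h i (x' i) - g y) - (f x y + ∑ i, h i (x i) - g y) := by
    have e1 : ∀ i : Fin K,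
        f (chainW x x' ((i : ℕ) + 1)) y + h i (x' i) - (f (chainW x x' i) y + h i (x i))
        = (f (chainW x x' ((i : ℕ) + 1)) y - f (chainW x x' i) y) + (h i (x' i) - h i (x i)) := by
      intro i; ring
    rw [Finset.sum_congr rfl (fun i _ => e1 i), Finset.sum_add_distrib, ← htel,
      Finset.sum_sub_distrib]
    ring
  calc (f x' y + ∑ i, h i (x' i) - g y) - (f x y + ∑ i, h i (x i) - g y)
      = ∑ i : Fin K,
        (f (chainW x x' ((i : ℕ) + 1)) y + h i (x' i) - (f (chainW x x' i) y + h i (x i))) :=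
        expand.symm
    _ ≤ ∑ i : Fin K, -(βr / 2 + μmin) * ‖x' i - x i‖ ^ 2 :=
        Finset.sum_le_sum fun i _ => key i
    _ = -(βr / 2 + μmin) * ∑ i : Fin K, ‖x' i - x i‖ ^ 2 := by rw [Finset.mul_sum]
    _ = -(βr / 2 + μmin) * ‖x' - x‖ ^ 2 := by rw [hsum]
end
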